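/- For the even-Poisson distribution q(k,λ), the exponential moment satisfies E_q[e^{ck}] = cosh(λ e^c)/cosh(λ) ≤ exp(λ(e^c − 1)) for all c ≥ 0. -/

import Mathlib

/-- Exponential moment of the even-Poisson distribution:
`E_q[e^{ck}] = cosh(λ e^c)/cosh λ ≤ exp(λ(e^c − 1))` for `c ≥ 0`. -/
theorem evenPoisson_exp_moment (lam c : ℝ) (hlam : 0 < lam) (hc : 0 ≤ c) :
    (∑' k : ℕ, (lam ^ (2 * k) / (Nat.factorial (2 * k) : ℝ) / Real.cosh lam)
        * Real.exp (c * (2 * k))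
      = Real.cosh (lam * Real.exp c) / Real.cosh lam) ∧
    Real.cosh (lam * Real.exp c) / Real.cosh lam
      ≤ Real.exp (lam * (Real.exp c - 1)) := by
  have hcosh : 0 < Real.cosh lam := Real.cosh_pos lam
  constructor
  · have h := Real.hasSum_cosh (lam * Real.exp c)
    have h2 : HasSum (fun k : ℕ => (lam ^ (2 * k) / (Nat.factorial (2 * k) : ℝ) / Real.cosh lam)
        * Real.exp (c * (2 * k))) (Real.cosh (lam * Real.exp c) / Real.cosh lam) := by
      have := h.div_const (Real.cosh lam)
      convert this using 2 with k
      case e'_3 => rfl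
      rw [mul_pow, ← Real.exp_nat_mul]
      ring_nf
      norm_num
      left; ring
    exact h2.tsum_eq
  · rw [div_le_iff₀ hcosh, Real.cosh_eq, Real.cosh_eq]
    have h1 : Real.exp (-(lam * Real.exp c)) ≤ Real.exp (lam * (Real.exp c - 1)) * Real.exp (-lam) := by
      rw [← Real.exp_add]
      apply Real.exp_le_exp.mpr
      nlinarith [Real.one_le_exp hc, hlam.le]
    have h2 : Real.exp (lam * Real.exp c) = Real.exp (lam * (Real.exp c - 1)) * Real.exp lam := by
      rw [← Real.exp_add]; ring_nf
    nlinarith [Real.exp_pos (lam * (Real.exp c - 1)), Real.exp_pos lam, Real.exp_pos (-lam)]
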